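/- Let f(p) = -∑_{k=1}^K ln(pᵀ Ξ^k p) + pᵀ Ψ p on positive vectors p, where each Ξ^k is symmetric with strictly positive entries and Ψ is symmetric with nonnegative entries. Then g(p,q) = -∑_k [ (2 qᵀ Ξ^k [q ln(p/q)]) / (qᵀ Ξ^k q) + ln(qᵀ Ξ^k q) ] + qᵀ Ψ [p²/q] is an auxiliary function for f, i.e., g(p,q) ≥ f(p) for all positive p,q and g(p,p) = f(p). -/

import Mathlib

private lemma aux_psi {n : ℕ} (Ψ : Matrix (Fin n) (Fin n) ℝ) (hΨsymm : Ψ.IsSymm)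
    (hΨnonneg : ∀ i j, 0 ≤ Ψ i j) (p q : Fin n → ℝ) (hq : ∀ i, 0 < q i) :
    ∑ i, ∑ j, p i * Ψ i j * p j ≤ ∑ i, ∑ j, q i * Ψ i j * (p j ^ 2 / q j) := by
  have hswap : ∑ i, ∑ j, q i * Ψ i j * (p j ^ 2 / q j)
      = ∑ i, ∑ j, q j * Ψ i j * (p i ^ 2 / q i) := by
    rw [Finset.sum_comm]
    refine Finset.sum_congr rfl fun i _ => Finset.sum_congr rfl fun j _ => ?_
    rw [hΨsymm.apply i j]
  have key : ∀ i j : Fin n, p i * Ψ i j * p j ≤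
      (q i * Ψ i j * (p j ^ 2 / q j) + q j * Ψ i j * (p i ^ 2 / q i)) / 2 := by
    intro i j
    have hqi := hq i
    have hqj := hq j
    have hΨ := hΨnonneg i j
    have h1 : q i * Ψ i j * (p j ^ 2 / q j) = Ψ i j * (q i * p j ^ 2 / q j) := by ring
    have h2 : q j * Ψ i j * (p i ^ 2 / q i) = Ψ i j * (q j * p i ^ 2 / q i) := by ring
    have hAM : 2 * (p i * p j) ≤ q i * p j ^ 2 / q j + q j * p i ^ 2 / q i := by
      rw [div_add_div _ _ (ne_of_gt hqj) (ne_of_gt hqi), le_div_iff₀ (by positivity)]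
      nlinarith [sq_nonneg (q i * p j - q j * p i)]
    have := mul_le_mul_of_nonneg_left hAM hΨ
    rw [h1, h2]
    nlinarith [this]
  calc ∑ i, ∑ j, p i * Ψ i j * p j
      ≤ ∑ i, ∑ j, (q i * Ψ i j * (p j ^ 2 / q j) + q j * Ψ i j * (p i ^ 2 / q i)) / 2 :=
        Finset.sum_le_sum fun i _ => Finset.sum_le_sum fun j _ => key i j
    _ = ∑ i, ∑ j, q i * Ψ i j * (p j ^ 2 / q j) := by
        simp only [add_div, Finset.sum_add_distrib, ← Finset.sum_div]
        rw [← hswap]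
        ring

private lemma aux_log {n : ℕ} (Ξ : Matrix (Fin n) (Fin n) ℝ) (hsymm : Ξ.IsSymm)
    (hpos : ∀ i j, 0 < Ξ i j) (p q : Fin n → ℝ) (hp : ∀ i, 0 < p i) (hq : ∀ i, 0 < q i) :
    (2 * ∑ i, ∑ j, q i * Ξ i j * (q j * Real.log (p j / q j))) /
        (∑ i, ∑ j, q i * Ξ i j * q j) + Real.log (∑ i, ∑ j, q i * Ξ i j * q j)
      ≤ Real.log (∑ i, ∑ j, p i * Ξ i j * p j) := by
  rcases Nat.eq_zero_or_pos n with hn | hn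
  · subst hn
    simp
  have : Nonempty (Fin n) := Fin.pos_iff_nonempty.mp hn
  set S := ∑ i, ∑ j, q i * Ξ i j * q j with hSdef
  set Sp := ∑ i, ∑ j, p i * Ξ i j * p j with hSpdef
  set T := ∑ i, ∑ j, q i * Ξ i j * (q j * Real.log (p j / q j)) with hTdef
  have hS : 0 < S := Finset.sum_pos (fun i _ => Finset.sum_pos
    (fun j _ => by have := hq i; have := hq j; have := hpos i j; positivity)
    Finset.univ_nonempty) Finset.univ_nonempty
  have hSp : 0 < Sp := Finset.sum_pos (fun i _ => Finset.sum_pos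
    (fun j _ => by have := hp i; have := hp j; have := hpos i j; positivity)
    Finset.univ_nonempty) Finset.univ_nonempty
  -- 2T as a symmetric sum
  have hswapT : ∑ i, ∑ j, q i * Ξ i j * q j * Real.log (p i / q i) = T := by
    rw [hTdef, Finset.sum_comm]
    refine Finset.sum_congr rfl fun i _ => Finset.sum_congr rfl fun j _ => ?_
    rw [hsymm.apply i j]
    ring
  have h2T : 2 * T = ∑ i, ∑ j, q i * Ξ i j * q j *
      (Real.log (p i / q i) + Real.log (p j / q j)) := by
    simp only [mul_add, Finset.sum_add_distrib]
    rw [hswapT]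
    have : ∑ i, ∑ j, q i * Ξ i j * q j * Real.log (p j / q j) = T := by
      rw [hTdef]; refine Finset.sum_congr rfl fun i _ => Finset.sum_congr rfl fun j _ => ?_; ring
    rw [this]; ring
  -- termwise inequality
  have hkey : ∀ i j : Fin n, q i * Ξ i j * q j *
      (Real.log (p i / q i) + Real.log (p j / q j)) ≤
      p i * Ξ i j * p j * (S / Sp) - q i * Ξ i j * q j
        + q i * Ξ i j * q j * Real.log (Sp / S) := by
    intro i j
    have hpi := hp i; have hpj := hp j; have hqi := hq i; have hqj := hq j
    have hΞ := hpos i j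
    have hx1 : (0:ℝ) < (p i * p j) / (q i * q j) :=
      div_pos (mul_pos hpi hpj) (mul_pos hqi hqj)
    have hx : (0:ℝ) < (p i * p j) / (q i * q j) * (S / Sp) :=
      mul_pos hx1 (div_pos hS hSp)
    have hlog := Real.log_le_sub_one_of_pos hx
    have hexp : Real.log ((p i * p j) / (q i * q j) * (S / Sp))
        = Real.log (p i / q i) + Real.log (p j / q j) - Real.log (Sp / S) := by
      rw [Real.log_mul hx1.ne' (div_pos hS hSp).ne', ← div_mul_div_comm,
        Real.log_mul (div_pos hpi hqi).ne' (div_pos hpj hqj).ne',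
        Real.log_div hS.ne' hSp.ne', Real.log_div hSp.ne' hS.ne']
      ring
    rw [hexp] at hlog
    have ha : (0:ℝ) < q i * Ξ i j * q j := mul_pos (mul_pos hqi hΞ) hqj
    have hmul := mul_le_mul_of_nonneg_left hlog (le_of_lt ha)
    have hax : q i * Ξ i j * q j * ((p i * p j) / (q i * q j) * (S / Sp))
        = p i * Ξ i j * p j * (S / Sp) := by
      field_simp
    nlinarith [hmul, hax]
  have hsum : 2 * T ≤ ∑ i, ∑ j, (p i * Ξ i j * p j * (S / Sp) - q i * Ξ i j * q j
      + q i * Ξ i j * q j * Real.log (Sp / S)) := by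
    rw [h2T]
    exact Finset.sum_le_sum fun i _ => Finset.sum_le_sum fun j _ => hkey i j
  have hRHS : ∑ i, ∑ j, (p i * Ξ i j * p j * (S / Sp) - q i * Ξ i j * q j
      + q i * Ξ i j * q j * Real.log (Sp / S)) = S * Real.log (Sp / S) := by
    simp only [Finset.sum_add_distrib, Finset.sum_sub_distrib, ← Finset.sum_mul]
    rw [mul_comm Sp (S / Sp), div_mul_cancel₀ S hSp.ne']
    ring
  have hfin : 2 * T ≤ S * (Real.log Sp - Real.log S) := by
    rw [← Real.log_div (ne_of_gt hSp) (ne_of_gt hS)]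
    linarith [hsum, hRHS.le, hRHS.ge]
  have hdiv : 2 * T / S ≤ Real.log Sp - Real.log S := by
    rw [div_le_iff₀ hS]
    nlinarith [hfin]
  linarith

theorem auxiliary_function_lemma {n K : ℕ}
    (Ξ : Fin K → Matrix (Fin n) (Fin n) ℝ)
    (hΞsymm : ∀ k, (Ξ k).IsSymm) (hΞpos : ∀ k i j, 0 < Ξ k i j)
    (Ψ : Matrix (Fin n) (Fin n) ℝ) (hΨsymm : Ψ.IsSymm) (hΨnonneg : ∀ i j, 0 ≤ Ψ i j)
    (f : (Fin n → ℝ) → ℝ) (g : (Fin n → ℝ) → (Fin n → ℝ) → ℝ)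
    (hf : ∀ p, f p = -∑ k, Real.log (∑ i, ∑ j, p i * Ξ k i j * p j) +
        ∑ i, ∑ j, p i * Ψ i j * p j)
    (hg : ∀ p q, g p q =
        -∑ k, ((2 * ∑ i, ∑ j, q i * Ξ k i j * (q j * Real.log (p j / q j))) /
            (∑ i, ∑ j, q i * Ξ k i j * q j) +
          Real.log (∑ i, ∑ j, q i * Ξ k i j * q j)) +
        ∑ i, ∑ j, q i * Ψ i j * (p j ^ 2 / q j)) :
    (∀ p q : Fin n → ℝ, (∀ i, 0 < p i) → (∀ i, 0 < q i) → f p ≤ g p q) ∧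
    (∀ p : Fin n → ℝ, (∀ i, 0 < p i) → g p p = f p) := by
  constructor
  · intro p q hp hq
    rw [hf, hg]
    have hA : ∑ k, ((2 * ∑ i, ∑ j, q i * Ξ k i j * (q j * Real.log (p j / q j))) /
            (∑ i, ∑ j, q i * Ξ k i j * q j) +
          Real.log (∑ i, ∑ j, q i * Ξ k i j * q j))
        ≤ ∑ k, Real.log (∑ i, ∑ j, p i * Ξ k i j * p j) :=
      Finset.sum_le_sum fun k _ => aux_log (Ξ k) (hΞsymm k) (hΞpos k) p q hp hq
    have hB := aux_psi Ψ hΨsymm hΨnonneg p q hq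
    linarith
  · intro p hp
    rw [hf, hg]
    have h1 : ∀ j : Fin n, Real.log (p j / p j) = 0 := fun j => by
      rw [div_self (ne_of_gt (hp j)), Real.log_one]
    have h2 : ∀ j : Fin n, p j ^ 2 / p j = p j := fun j => by
      rw [sq, mul_div_assoc, div_self (ne_of_gt (hp j)), mul_one]
    simp [h1, h2]
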